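/- Let M be an ex-post mechanism whose returned privacy bound is a deterministic constant: M(X)_ε = ε_c for all datasets X. If M is (ε_c, δ)-probabilistically DP, i.e. for all neighbouring X ∼ X' there exists a measurable set S^δ with Pr(M(X) ∈ S^δ) ≤ δ such that Pr(M(X) ∈ S \ S^δ) ≤ e^{ε_c} · Pr(M(X') ∈ S \ S^δ) for all measurable S, then M is δ-probabilistically ex-post private: for all neighbouring X ∼ X', Pr_{(y,ε)∼M(X)}( ln(p_{M(X)}(y,ε)/p_{M(X')}(y,ε)) > ε ) ≤ δ. -/

import Mathlib

open MeasureTheory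
open scoped NNReal ENNReal

/-- If an ex-post mechanism `M` (values in `Y × ℝ≥0`, densities `p X`
w.r.t. a common σ-finite base measure `μ`) returns the deterministic privacy bound
`εc` and is `(εc, δ)`-probabilistically DP (for all neighbours there is a
measurable set `Sδ` with `M X Sδ ≤ δ` such that
`M X (S \ Sδ) ≤ exp εc * M X' (S \ Sδ)` for all measurable `S`), then `M` is
δ-probabilistically ex-post private: for all neighbours, the probability under
`M X` that `ln(p X (y,ε) / p X' (y,ε)) > ε`, i.e. that
`p X (y,ε) > exp ε * p X' (y,ε)`, is at most δ. -/
theorem probabilistic_dp_implies_prob_ex_post_private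
    {𝒳 Y : Type*} [MeasurableSpace Y]
    (Neighbor : 𝒳 → 𝒳 → Prop) (hsymm : Symmetric Neighbor)
    (μ : Measure (Y × ℝ≥0)) [SigmaFinite μ]
    (M : 𝒳 → Measure (Y × ℝ≥0)) (hMprob : ∀ X, IsProbabilityMeasure (M X))
    (p : 𝒳 → Y × ℝ≥0 → ℝ)
    (hp_nonneg : ∀ X z, 0 ≤ p X z) (hp_meas : ∀ X, Measurable (p X))
    (hdens : ∀ X, M X = μ.withDensity fun z => ENNReal.ofReal (p X z))
    (εc : ℝ≥0) (hconst : ∀ X, M X {z | z.2 ≠ εc} = 0)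
    (δ : ℝ) (hδ_nonneg : 0 ≤ δ) (hδ_lt : δ < 1)
    (hpdp : ∀ X X', Neighbor X X' → ∃ Sδ : Set (Y × ℝ≥0), MeasurableSet Sδ ∧
      M X Sδ ≤ ENNReal.ofReal δ ∧
      ∀ S : Set (Y × ℝ≥0), MeasurableSet S →
        M X (S \ Sδ) ≤ ENNReal.ofReal (Real.exp εc) * M X' (S \ Sδ)) :
    ∀ X X', Neighbor X X' →
      M X {z | Real.exp (z.2 : ℝ) * p X' z < p X z} ≤ ENNReal.ofReal δ := by
  intro X X' hN
  obtain ⟨Sδ, hSδ_meas, hSδ_le, hS⟩ := hpdp X X' hN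
  -- the set where the εc-based density ratio is violated
  set A : Set (Y × ℝ≥0) := {z | Real.exp (εc : ℝ) * p X' z < p X z} with hA
  have hA_meas : MeasurableSet A := by
    apply measurableSet_lt (by exact (hp_meas X').const_mul _) (hp_meas X)
  set B : Set (Y × ℝ≥0) := {z | Real.exp (z.2 : ℝ) * p X' z < p X z} with hB
  -- B ⊆ A ∪ {z.2 ≠ εc}
  have hBsub : B ⊆ A ∪ {z | z.2 ≠ εc} := by
    intro z hz
    by_cases h : z.2 = εc
    · left
      have hz' : Real.exp (z.2 : ℝ) * p X' z < p X z := hz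
      rw [h] at hz'
      exact hz'
    · right; exact h
  set T : Set (Y × ℝ≥0) := A \ Sδ with hT
  have hT_meas : MeasurableSet T := hA_meas.diff hSδ_meas
  -- Show M X T = 0
  have hMXT : M X T = 0 := by
    have hineq := hS A hA_meas
    -- integrals w.r.t. μ restricted to T
    set f : Y × ℝ≥0 → ℝ≥0∞ := fun z => ENNReal.ofReal (p X z) with hf
    set g : Y × ℝ≥0 → ℝ≥0∞ := fun z => ENNReal.ofReal (Real.exp (εc : ℝ) * p X' z) with hg
    have hMXTint : M X T = ∫⁻ z in T, f z ∂μ := by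
      rw [hdens X, withDensity_apply _ hT_meas]
    have hMX'Tint : ENNReal.ofReal (Real.exp εc) * M X' T = ∫⁻ z in T, g z ∂μ := by
      rw [hdens X', withDensity_apply _ hT_meas, ← lintegral_const_mul]
      · congr 1
        funext z
        rw [hg]
        simp [ENNReal.ofReal_mul (Real.exp_nonneg _)]
      · exact ENNReal.measurable_ofReal.comp (hp_meas X')
    -- g < f on T
    have hgf : ∀ z ∈ T, g z < f z := by
      intro z hz
      have hz' : Real.exp (εc : ℝ) * p X' z < p X z := hz.1
      exact ENNReal.ofReal_lt_ofReal_iff_of_nonneg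
        (mul_nonneg (Real.exp_nonneg _) (hp_nonneg X' z)) |>.mpr hz'
    have hg_le_f : g ≤ᵐ[μ.restrict T] f := by
      filter_upwards [ae_restrict_mem hT_meas] with z hz
      exact (hgf z hz).le
    have hf_fin : ∫⁻ z in T, f z ∂μ ≠ ∞ := by
      rw [← hMXTint]
      haveI := hMprob X
      exact ((prob_le_one (μ := M X)).trans_lt ENNReal.one_lt_top).ne
    have hf_le_g : ∫⁻ z in T, f z ∂μ ≤ ∫⁻ z in T, g z ∂μ := by
      rw [← hMXTint, ← hMX'Tint]; exact hineq
    have hg_fin : ∫⁻ z in T, g z ∂μ ≠ ∞ :=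
      ((lintegral_mono_ae hg_le_f).trans_lt hf_fin.lt_top).ne
    have hae : g =ᵐ[μ.restrict T] f :=
      ae_eq_of_ae_le_of_lintegral_le hg_le_f hg_fin
        ((ENNReal.measurable_ofReal.comp (hp_meas X)).aemeasurable) hf_le_g
    -- but g ≠ f everywhere on T, so μ T = 0
    have hμT : μ T = 0 := by
      have : μ.restrict T {z | g z ≠ f z} = 0 := hae
      have hTsub : T ⊆ {z | g z ≠ f z} := fun z hz => (hgf z hz).ne
      have := measure_mono_null (t := {z | g z ≠ f z}) hTsub this
      rwa [Measure.restrict_apply_self] at this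
    rw [hMXTint]
    exact le_antisymm (by
      calc ∫⁻ z in T, f z ∂μ ≤ ∫⁻ _ in T, ∞ ∂μ := by
            exact lintegral_mono fun z => le_top
        _ = ∞ * μ T := by simp [lintegral_const]
        _ = 0 := by rw [hμT]; simp) zero_le
  -- combine
  calc M X B ≤ M X (A ∪ {z | z.2 ≠ εc}) := measure_mono hBsub
    _ ≤ M X A + M X {z | z.2 ≠ εc} := measure_union_le _ _
    _ = M X A := by rw [hconst X, add_zero]
    _ ≤ M X (T ∪ Sδ) := measure_mono (fun z hz => by
        by_cases h : z ∈ Sδ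
        · exact Or.inr h
        · exact Or.inl ⟨hz, h⟩)
    _ ≤ M X T + M X Sδ := measure_union_le _ _
    _ = M X Sδ := by rw [hMXT, zero_add]
    _ ≤ ENNReal.ofReal δ := hSδ_le
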